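/- Lemma 4.2 (strip analyticity implies membership in the analytic Banach scale): Let ρ > 0 and let F be holomorphic on the strip S = {z ∈ ℂ : |Im z| < ρ} with sup_{|y|<ρ} ∫_ℝ |F(x+iy)|² dx < ∞, and let f : ℝ → ℝ be the (real-valued) restriction of F to the real axis. Then for every ρ' < ρ and every α ≥ 0 one has f ∈ B_{α,ρ'}, i.e. all derivatives f^{(n)} lie in L²(ℝ) and Σ_{n=0}^∞ (‖f^{(n)}‖_{L²(ℝ)}/n!) n^α ρ'^n < ∞. -/

import Mathlib

open MeasureTheory Topology Filter
open scoped ENNReal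

/-- The `L²(ℝ)` norm. -/
noncomputable def L2Norm (f : ℝ → ℝ) : ℝ := (eLpNorm f 2 volume).toReal

/-- The `n`-th term (for `n ≥ 1`, evaluated at `n`) of the `B_{α,ρ}` norm. -/
noncomputable def Bterm (α ρ : ℝ) (f : ℝ → ℝ) (n : ℕ) : ℝ :=
  L2Norm (iteratedDeriv n f) / (n.factorial : ℝ) * (n : ℝ) ^ α * ρ ^ n

/-- Membership in the analytic Banach scale `B_{α,ρ}`: all derivatives lie in `L²(ℝ)`
and `‖f‖_{B_{α,ρ}} = ‖f‖_{L²} + Σ_{n≥1} (‖f^{(n)}‖_{L²}/n!) n^α ρ^n < ∞`. -/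
def MemBspace (α ρ : ℝ) (f : ℝ → ℝ) : Prop :=
  (∀ n : ℕ, MemLp (iteratedDeriv n f) 2 volume) ∧
  Summable (fun n : ℕ => Bterm α ρ f (n + 1))

/-- **Lemma 4.2** (strip analyticity implies membership in the analytic Banach scale):
if `F` is holomorphic on the strip `{|Im z| < ρ}` with uniformly bounded `L²` norms on
horizontal lines, and `f` is its real-valued restriction to the real axis, then
`f ∈ B_{α,ρ'}` for every `ρ' < ρ` and every `α ≥ 0`. -/
theorem strip_holomorphic_restriction_mem_banach_scale
    (ρ : ℝ) (hρ : 0 < ρ) (F : ℂ → ℂ)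
    (hF : DifferentiableOn ℂ F {z : ℂ | |z.im| < ρ})
    (hbound : ∃ M : ℝ≥0∞, M ≠ ⊤ ∧ ∀ y : ℝ, |y| < ρ →
      (∫⁻ x : ℝ, (‖F (x + y * Complex.I)‖₊ : ℝ≥0∞) ^ 2) ≤ M)
    (f : ℝ → ℝ) (hf : ∀ x : ℝ, (f x : ℂ) = F x) :
    ∀ ρ' : ℝ, 0 < ρ' → ρ' < ρ → ∀ α : ℝ, 0 ≤ α → MemBspace α ρ' f := by
    classical
  obtain ⟨M, hMtop, hM⟩ := hbound
  intro ρ' hρ'0 hρ'ρ α hα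
  set S : Set ℂ := {z : ℂ | |z.im| < ρ} with hSdef
  have hS : IsOpen S := isOpen_lt (continuous_abs.comp Complex.continuous_im) continuous_const
  have hFc : ContinuousOn F S := hF.continuousOn
  have hA : AnalyticOnNhd ℂ F S := fun z hz => hF.analyticAt (hS.mem_nhds hz)
  have hAn : ∀ n : ℕ, AnalyticOnNhd ℂ (iteratedDeriv n F) S := by
    intro n
    rw [iteratedDeriv_eq_iterate]
    exact hA.iterated_deriv n
  have hmem : ∀ x : ℝ, (x : ℂ) ∈ S := by
    intro x
    simp only [hSdef, Set.mem_setOf_eq, Complex.ofReal_im, abs_zero]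
    exact hρ
  have hdiff : ∀ (n : ℕ) (x : ℝ), DifferentiableAt ℂ (iteratedDeriv n F) ↑x := fun n x =>
    (hAn n ↑x (hmem x)).differentiableAt
  -- the real iterated derivatives of `f` are the real parts of the complex ones
  have hfFn : ∀ (n : ℕ) (x : ℝ), iteratedDeriv n f x = (iteratedDeriv n F ↑x).re := by
    intro n
    induction n with
    | zero =>
      intro x
      simp only [iteratedDeriv_zero, ← hf x, Complex.ofReal_re]
    | succ n ih =>
      intro x
      have hfun : iteratedDeriv n f = fun y : ℝ => (iteratedDeriv n F ↑y).re := funext ih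
      have hD : HasDerivAt (iteratedDeriv n F) (deriv (iteratedDeriv n F) ↑x) ↑x :=
        (hdiff n x).hasDerivAt
      have h2 := hD.real_of_complex
      rw [iteratedDeriv_succ, hfun, iteratedDeriv_succ]
      exact h2.deriv
  have hcontF : ∀ n : ℕ, Continuous fun x : ℝ => iteratedDeriv n F ↑x := by
    intro n
    rw [continuous_iff_continuousAt]
    intro x
    exact ((hdiff n x).continuousAt).comp Complex.continuous_ofReal.continuousAt
  have hcontf : ∀ n : ℕ, Continuous (iteratedDeriv n f) := by
    intro n
    have h1 : iteratedDeriv n f = fun x : ℝ => (iteratedDeriv n F ↑x).re := funext (hfFn n)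
    rw [h1]
    exact Complex.continuous_re.comp (hcontF n)
  set r : ℝ := (ρ' + ρ) / 2 with hrdef
  have hr0 : 0 < r := by rw [hrdef]; linarith
  have hρ'r : ρ' < r := by rw [hrdef]; linarith
  have hrρ : r < ρ := by rw [hrdef]; linarith
  have hsub : ∀ x : ℝ, Metric.closedBall (x : ℂ) r ⊆ S := by
    intro x z hz
    rw [Metric.mem_closedBall, Complex.dist_eq] at hz
    have h1 : |(z - ↑x).im| ≤ ‖z - ↑x‖ := Complex.abs_im_le_norm _
    simp only [Complex.sub_im, Complex.ofReal_im, sub_zero] at h1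
    exact lt_of_le_of_lt (h1.trans hz) hrρ
  set R : NNReal := ⟨r, hr0.le⟩ with hRdef
  have hR0 : 0 < R := by
    rw [← NNReal.coe_lt_coe]
    exact hr0
  have hRr : (R : ℝ) = r := rfl
  have hcirc_mem : ∀ (x θ : ℝ), circleMap (↑x) r θ ∈ S := by
    intro x θ
    exact hsub x (Metric.sphere_subset_closedBall (circleMap_mem_sphere (↑x) hr0.le θ))
  have hcirc_cont : ∀ x : ℝ, Continuous fun θ : ℝ => F (circleMap (↑x) r θ) := by
    intro x
    exact hFc.comp_continuous (continuous_circleMap _ _) (hcirc_mem x)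
  -- Cauchy estimate
  have hCauchy : ∀ (n : ℕ) (x : ℝ), ‖iteratedDeriv n F ↑x‖ ≤
      (n.factorial : ℝ) * ((2 * Real.pi)⁻¹ *
        ∫ θ in (0 : ℝ)..(2 * Real.pi), ‖F (circleMap (↑x) r θ)‖) * r⁻¹ ^ n := by
    intro n x
    have hball : DifferentiableOn ℂ F (Metric.closedBall (↑x) (R : ℝ)) :=
      hF.mono (by rw [hRr]; exact hsub x)
    have hp : HasFPowerSeriesOnBall F (cauchyPowerSeries F ↑x R) ↑x R :=
      hball.hasFPowerSeriesOnBall hR0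
    have h1 : iteratedDeriv n F ↑x =
        n.factorial • ((cauchyPowerSeries F ↑x R n) fun _ => (1 : ℂ)) := by
      rw [iteratedDeriv_eq_iteratedFDeriv, ← hp.factorial_smul 1 n]
    have h2 : ‖(cauchyPowerSeries F ↑x R n) fun _ => (1 : ℂ)‖ ≤ ‖cauchyPowerSeries F ↑x R n‖ := by
      have := (cauchyPowerSeries F ↑x R n).le_opNorm fun _ => (1 : ℂ)
      simpa using this
    have h3 := norm_cauchyPowerSeries_le F ↑x (R : ℝ) n
    rw [h1, nsmul_eq_mul, norm_mul, Complex.norm_natCast]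
    have h4 : ‖cauchyPowerSeries F ↑x (R : ℝ) n‖ ≤
        ((2 * Real.pi)⁻¹ * ∫ θ in (0 : ℝ)..(2 * Real.pi), ‖F (circleMap (↑x) r θ)‖) * r⁻¹ ^ n := by
      have habs : |(R : ℝ)| = r := by rw [hRr, abs_of_pos hr0]
      rw [habs] at h3
      simpa only [hRr, inv_pow] using h3
    calc (n.factorial : ℝ) * ‖(cauchyPowerSeries F ↑x R n) fun _ => (1 : ℂ)‖
        ≤ (n.factorial : ℝ) * (((2 * Real.pi)⁻¹ *
            ∫ θ in (0 : ℝ)..(2 * Real.pi), ‖F (circleMap (↑x) r θ)‖) * r⁻¹ ^ n) := by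
          exact mul_le_mul_of_nonneg_left (h2.trans h4) (by positivity)
      _ = (n.factorial : ℝ) * ((2 * Real.pi)⁻¹ *
            ∫ θ in (0 : ℝ)..(2 * Real.pi), ‖F (circleMap (↑x) r θ)‖) * r⁻¹ ^ n := by ring
  -- move to lintegrals
  set g : ℝ → ℝ → ℝ≥0∞ := fun x θ => (‖F (circleMap (↑x) r θ)‖₊ : ℝ≥0∞) with hgdef
  have hIoc : volume (Set.Ioc (0 : ℝ) (2 * Real.pi)) = ENNReal.ofReal (2 * Real.pi) := by
    rw [Real.volume_Ioc, sub_zero]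
  have hprodcont : Continuous fun p : ℝ × ℝ => F (circleMap (↑p.1) r p.2) := by
    apply hFc.comp_continuous
    · simp only [circleMap]
      exact (Complex.continuous_ofReal.comp continuous_fst).add
        (continuous_const.mul (Complex.continuous_exp.comp
          ((Complex.continuous_ofReal.comp continuous_snd).mul continuous_const)))
    · exact fun p => hcirc_mem p.1 p.2
  have hmeas2 : Measurable (Function.uncurry fun x θ : ℝ => (g x θ) ^ 2) := by
    have : Measurable fun p : ℝ × ℝ => ((‖F (circleMap (↑p.1) r p.2)‖₊ : ℝ≥0∞)) ^ 2 :=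
      (hprodcont.nnnorm.measurable.coe_nnreal_ennreal).pow_const 2
    exact this
  have hswap : (∫⁻ x : ℝ, ∫⁻ θ in Set.Ioc 0 (2 * Real.pi), (g x θ) ^ 2)
      = ∫⁻ θ in Set.Ioc 0 (2 * Real.pi), ∫⁻ x : ℝ, (g x θ) ^ 2 :=
    lintegral_lintegral_swap hmeas2.aemeasurable
  -- the inner integral is bounded by `M`
  have hcm : ∀ (x θ : ℝ), circleMap (↑x) r θ =
      ↑(x + r * Real.cos θ) + ↑(r * Real.sin θ) * Complex.I := by
    intro x θ
    apply Complex.ext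
    · simp [circleMap, Complex.exp_ofReal_mul_I_re, Complex.cos_ofReal_re]
    · simp [circleMap, Complex.exp_ofReal_mul_I_im, Complex.sin_ofReal_re]
  have hinner : ∀ θ : ℝ, (∫⁻ x : ℝ, (g x θ) ^ 2) ≤ M := by
    intro θ
    have hy : |r * Real.sin θ| < ρ := by
      rw [abs_mul, abs_of_pos hr0]
      have h1 : |Real.sin θ| ≤ 1 := Real.abs_sin_le_one θ
      nlinarith
    calc (∫⁻ x : ℝ, (g x θ) ^ 2)
        = ∫⁻ x : ℝ, (fun y : ℝ =>
            (‖F (↑y + ↑(r * Real.sin θ) * Complex.I)‖₊ : ℝ≥0∞) ^ 2) (x + r * Real.cos θ) := by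
          simp only [hgdef]
          congr 1
          funext x
          rw [hcm x θ]
      _ = ∫⁻ y : ℝ, (‖F (↑y + ↑(r * Real.sin θ) * Complex.I)‖₊ : ℝ≥0∞) ^ 2 :=
          lintegral_add_right_eq_self
            (fun y : ℝ => (‖F (↑y + ↑(r * Real.sin θ) * Complex.I)‖₊ : ℝ≥0∞) ^ 2)
            (r * Real.cos θ)
      _ ≤ M := hM _ hy
  -- Cauchy-Schwarz on the circle
  have hpow : ∀ a : ℝ≥0∞, a ^ (2 : ℝ) = a ^ (2 : ℕ) := fun a => by
    rw [show (2 : ℝ) = ((2 : ℕ) : ℝ) by norm_num, ENNReal.rpow_natCast]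
  have hhalf : ∀ a : ℝ≥0∞, (a ^ (1 / 2 : ℝ)) ^ (2 : ℕ) = a := fun a => by
    rw [← ENNReal.rpow_natCast (a ^ (1 / 2 : ℝ)) 2, ← ENNReal.rpow_mul]
    norm_num
  have hCS : ∀ x : ℝ, (∫⁻ θ in Set.Ioc 0 (2 * Real.pi), g x θ) ^ 2
      ≤ ENNReal.ofReal (2 * Real.pi) * ∫⁻ θ in Set.Ioc 0 (2 * Real.pi), (g x θ) ^ 2 := by
    intro x
    have hgm : AEMeasurable (g x) (volume.restrict (Set.Ioc 0 (2 * Real.pi))) :=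
      ((hcirc_cont x).nnnorm.measurable.coe_nnreal_ennreal).aemeasurable
    have h22 : (2 : ℝ).HolderConjugate 2 := Real.holderConjugate_iff.2 ⟨one_lt_two, by norm_num⟩
    have hH := ENNReal.lintegral_mul_le_Lp_mul_Lq
      (volume.restrict (Set.Ioc 0 (2 * Real.pi))) h22 hgm
      (aemeasurable_const (b := (1 : ℝ≥0∞)))
    simp only [Pi.mul_apply, mul_one, ENNReal.one_rpow, lintegral_one,
      Measure.restrict_apply_univ] at hH
    rw [hIoc] at hH
    have hsq := pow_le_pow_left' hH 2
    calc (∫⁻ θ in Set.Ioc 0 (2 * Real.pi), g x θ) ^ 2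
        ≤ ((∫⁻ θ in Set.Ioc 0 (2 * Real.pi), g x θ ^ (2 : ℝ)) ^ (1 / 2 : ℝ)
            * (ENNReal.ofReal (2 * Real.pi)) ^ (1 / 2 : ℝ)) ^ 2 := hsq
      _ = ENNReal.ofReal (2 * Real.pi) * ∫⁻ θ in Set.Ioc 0 (2 * Real.pi), (g x θ) ^ 2 := by
          rw [mul_pow, hhalf, hhalf, mul_comm]
          congr 1
          exact lintegral_congr fun θ => hpow (g x θ)
  -- pointwise bound in `ℝ≥0∞`
  have hπ : (0:ℝ) < 2 * Real.pi := by positivity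
  have key : ∀ n : ℕ, (∫⁻ x : ℝ, (‖iteratedDeriv n f x‖₊ : ℝ≥0∞) ^ 2)
      ≤ ENNReal.ofReal ((n.factorial : ℝ) * r⁻¹ ^ n) ^ 2 * M := by
    intro n
    set c : ℝ := (n.factorial : ℝ) * (2 * Real.pi)⁻¹ * r⁻¹ ^ n with hcdef
    have hc0 : (0:ℝ) ≤ c := by positivity
    have hpt : ∀ x : ℝ, (‖iteratedDeriv n f x‖₊ : ℝ≥0∞)
        ≤ ENNReal.ofReal c * ∫⁻ θ in Set.Ioc 0 (2 * Real.pi), g x θ := by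
      intro x
      have h1 : ‖iteratedDeriv n f x‖ ≤ ‖iteratedDeriv n F ↑x‖ := by
        rw [Real.norm_eq_abs, hfFn n x]
        exact Complex.abs_re_le_norm _
      have h2 : ‖iteratedDeriv n f x‖ ≤
          c * ∫ θ in (0:ℝ)..(2 * Real.pi), ‖F (circleMap (↑x) r θ)‖ := by
        refine (h1.trans (hCauchy n x)).trans (le_of_eq ?_)
        rw [hcdef]; ring
      have hIcont := (hcirc_cont x).norm
      have hint : IntegrableOn (fun θ : ℝ => ‖F (circleMap (↑x) r θ)‖)
          (Set.Ioc 0 (2 * Real.pi)) volume :=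
        (hIcont.intervalIntegrable 0 (2 * Real.pi)).1
      have hIeq : ENNReal.ofReal (∫ θ in (0:ℝ)..(2 * Real.pi), ‖F (circleMap (↑x) r θ)‖)
          = ∫⁻ θ in Set.Ioc 0 (2 * Real.pi), g x θ := by
        rw [intervalIntegral.integral_of_le hπ.le,
          ofReal_integral_eq_lintegral_ofReal hint
            (Filter.Eventually.of_forall fun θ => norm_nonneg _)]
        simp only [hgdef, ofReal_norm, enorm_eq_nnnorm]
      calc (‖iteratedDeriv n f x‖₊ : ℝ≥0∞) = ENNReal.ofReal ‖iteratedDeriv n f x‖ :=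
            (ofReal_norm _).symm
        _ ≤ ENNReal.ofReal (c * ∫ θ in (0:ℝ)..(2 * Real.pi), ‖F (circleMap (↑x) r θ)‖) :=
            ENNReal.ofReal_le_ofReal h2
        _ = ENNReal.ofReal c * ENNReal.ofReal
              (∫ θ in (0:ℝ)..(2 * Real.pi), ‖F (circleMap (↑x) r θ)‖) :=
            ENNReal.ofReal_mul hc0
        _ = ENNReal.ofReal c * ∫⁻ θ in Set.Ioc 0 (2 * Real.pi), g x θ := by rw [hIeq]
    have hc2π : ENNReal.ofReal c * ENNReal.ofReal (2 * Real.pi)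
        = ENNReal.ofReal ((n.factorial : ℝ) * r⁻¹ ^ n) := by
      rw [← ENNReal.ofReal_mul hc0]
      congr 1
      rw [hcdef]
      field_simp
    calc (∫⁻ x : ℝ, (‖iteratedDeriv n f x‖₊ : ℝ≥0∞) ^ 2)
        ≤ ∫⁻ x : ℝ, (ENNReal.ofReal c) ^ 2 * (∫⁻ θ in Set.Ioc 0 (2 * Real.pi), g x θ) ^ 2 := by
          refine lintegral_mono fun x => ?_
          rw [← mul_pow]
          exact pow_le_pow_left' (hpt x) 2
      _ = (ENNReal.ofReal c) ^ 2 *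
            ∫⁻ x : ℝ, (∫⁻ θ in Set.Ioc 0 (2 * Real.pi), g x θ) ^ 2 :=
          lintegral_const_mul' _ _ (by exact ENNReal.pow_ne_top ENNReal.ofReal_ne_top)
      _ ≤ (ENNReal.ofReal c) ^ 2 * ∫⁻ x : ℝ,
            ENNReal.ofReal (2 * Real.pi) * ∫⁻ θ in Set.Ioc 0 (2 * Real.pi), (g x θ) ^ 2 := by
          gcongr with x
          exact hCS x
      _ = (ENNReal.ofReal c) ^ 2 * (ENNReal.ofReal (2 * Real.pi) *
            ∫⁻ x : ℝ, ∫⁻ θ in Set.Ioc 0 (2 * Real.pi), (g x θ) ^ 2) := by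
          rw [lintegral_const_mul' _ _ ENNReal.ofReal_ne_top]
      _ = (ENNReal.ofReal c) ^ 2 * (ENNReal.ofReal (2 * Real.pi) *
            ∫⁻ θ in Set.Ioc 0 (2 * Real.pi), ∫⁻ x : ℝ, (g x θ) ^ 2) := by rw [hswap]
      _ ≤ (ENNReal.ofReal c) ^ 2 * (ENNReal.ofReal (2 * Real.pi) *
            ∫⁻ _ in Set.Ioc 0 (2 * Real.pi), M) := by
          gcongr with θ
          exact hinner θ
      _ = (ENNReal.ofReal c) ^ 2 * (ENNReal.ofReal (2 * Real.pi) *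
            (M * ENNReal.ofReal (2 * Real.pi))) := by
          rw [setLIntegral_const, hIoc]
      _ = (ENNReal.ofReal c * ENNReal.ofReal (2 * Real.pi)) ^ 2 * M := by ring
      _ = ENNReal.ofReal ((n.factorial : ℝ) * r⁻¹ ^ n) ^ 2 * M := by rw [hc2π]
  -- `L²` bound on the derivatives
  have hsnorm : ∀ n : ℕ, eLpNorm (iteratedDeriv n f) 2 volume
      ≤ ENNReal.ofReal ((n.factorial : ℝ) * r⁻¹ ^ n) * M ^ (1 / 2 : ℝ) := by
    intro n
    rw [eLpNorm_eq_lintegral_rpow_enorm_toReal two_ne_zero ENNReal.ofNat_ne_top]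
    simp only [enorm_eq_nnnorm]
    have h2R : (2 : ℝ≥0∞).toReal = (2 : ℝ) := by simp
    rw [h2R]
    have h1 : (∫⁻ x : ℝ, (‖iteratedDeriv n f x‖₊ : ℝ≥0∞) ^ (2:ℝ))
        = ∫⁻ x : ℝ, (‖iteratedDeriv n f x‖₊ : ℝ≥0∞) ^ 2 :=
      lintegral_congr fun x => hpow _
    rw [h1]
    calc (∫⁻ x : ℝ, (‖iteratedDeriv n f x‖₊ : ℝ≥0∞) ^ 2) ^ (1 / 2 : ℝ)
        ≤ (ENNReal.ofReal ((n.factorial : ℝ) * r⁻¹ ^ n) ^ 2 * M) ^ (1 / 2 : ℝ) :=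
          ENNReal.rpow_le_rpow (key n) (by norm_num)
      _ = ENNReal.ofReal ((n.factorial : ℝ) * r⁻¹ ^ n) * M ^ (1 / 2 : ℝ) := by
          rw [ENNReal.mul_rpow_of_nonneg _ _ (by norm_num : (0:ℝ) ≤ 1/2)]
          congr 1
          rw [← ENNReal.rpow_natCast (ENNReal.ofReal _) 2, ← ENNReal.rpow_mul]
          norm_num
  have hM12 : M ^ (1 / 2 : ℝ) ≠ ⊤ := ENNReal.rpow_ne_top_of_nonneg (by norm_num) hMtop
  have hfin : ∀ n : ℕ, ENNReal.ofReal ((n.factorial : ℝ) * r⁻¹ ^ n) * M ^ (1 / 2 : ℝ) ≠ ⊤ :=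
    fun n => ENNReal.mul_ne_top ENNReal.ofReal_ne_top hM12
  set c0 : ℝ := (M ^ (1 / 2 : ℝ)).toReal with hc0def
  have hc00 : (0:ℝ) ≤ c0 := ENNReal.toReal_nonneg
  have hL2 : ∀ n : ℕ, L2Norm (iteratedDeriv n f) ≤ (n.factorial : ℝ) * r⁻¹ ^ n * c0 := by
    intro n
    have h1 := ENNReal.toReal_mono (hfin n) (hsnorm n)
    rw [ENNReal.toReal_mul, ENNReal.toReal_ofReal (by positivity)] at h1
    exact h1
  constructor
  · intro n
    refine ⟨(hcontf n).aestronglyMeasurable, lt_of_le_of_lt (hsnorm n) ?_⟩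
    exact lt_of_le_of_ne le_top (hfin n)
  · -- summability
    set q : ℝ := ρ' / r with hqdef
    have hq0 : 0 ≤ q := by positivity
    have hq1 : q < 1 := (div_lt_one hr0).2 hρ'r
    set k : ℕ := ⌈α⌉₊ with hkdef
    have hsum0 : Summable fun n : ℕ => (n : ℝ) ^ k * q ^ n :=
      summable_pow_mul_geometric_of_norm_lt_one k
        (by rw [Real.norm_eq_abs, abs_of_nonneg hq0]; exact hq1)
    have hsum1 : Summable fun n : ℕ => c0 * (((n:ℝ) + 1) ^ k * q ^ (n + 1)) := by
      exact (((summable_nat_add_iff 1).2 hsum0).congr (by push_cast; intro n; ring)).mul_left c0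
    refine Summable.of_nonneg_of_le (fun n => ?_) (fun n => ?_) hsum1
    · unfold Bterm L2Norm
      positivity
    · unfold Bterm
      have hfactpos : (0:ℝ) < ((n+1).factorial : ℝ) := by positivity
      have h1 : L2Norm (iteratedDeriv (n+1) f) / ((n+1).factorial : ℝ) ≤ r⁻¹ ^ (n+1) * c0 := by
        rw [div_le_iff₀ hfactpos]
        calc L2Norm (iteratedDeriv (n+1) f) ≤ ((n+1).factorial : ℝ) * r⁻¹ ^ (n+1) * c0 :=
              hL2 (n+1)
          _ = r⁻¹ ^ (n+1) * c0 * ((n+1).factorial : ℝ) := by ring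
      have h2 : ((n+1 : ℕ) : ℝ) ^ α ≤ ((n:ℝ) + 1) ^ k := by
        push_cast
        rw [← Real.rpow_natCast ((n:ℝ) + 1) k]
        refine Real.rpow_le_rpow_of_exponent_le (by push_cast; linarith [Nat.cast_nonneg (α := ℝ) n]) ?_
        exact Nat.le_ceil α
      have hL2nn : (0:ℝ) ≤ L2Norm (iteratedDeriv (n+1) f) / ((n+1).factorial : ℝ) :=
        div_nonneg ENNReal.toReal_nonneg hfactpos.le
      have hαnn : (0:ℝ) ≤ ((n+1 : ℕ) : ℝ) ^ α := Real.rpow_nonneg (by positivity) α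
      calc L2Norm (iteratedDeriv (n+1) f) / ((n+1).factorial : ℝ)
              * ((n+1 : ℕ) : ℝ) ^ α * ρ' ^ (n+1)
          ≤ (r⁻¹ ^ (n+1) * c0) * ((n:ℝ) + 1) ^ k * ρ' ^ (n+1) := by
            refine mul_le_mul_of_nonneg_right ?_ (by positivity)
            exact mul_le_mul h1 h2 hαnn (by positivity)
        _ = c0 * (((n:ℝ) + 1) ^ k * q ^ (n + 1)) := by
            rw [hqdef, div_pow, inv_pow]
            field_simp
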